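/- Let X be a nonempty Baire separable metrizable space which is analytic or coanalytic (i.e., homeomorphic to an analytic, respectively coanalytic, subset of a Polish space). Then X has a dense subspace that is Polish (separable and completely metrizable). -/

import Mathlib

open TopologicalSpace MeasureTheory Topology

/-- A space is *homogeneous* if its homeomorphism group acts transitively. -/
def HomogeneousSpace (X : Type*) [TopologicalSpace X] : Prop :=
  ∀ x y : X, ∃ h : X ≃ₜ X, h x = y

/-- A subset is a *homogeneous subspace* if it is homogeneous in the subspace topology. -/
def HomogeneousSubspace {X : Type*} [TopologicalSpace X] (S : Set X) : Prop :=
  ∀ x y : S, ∃ h : ↥S ≃ₜ ↥S, h x = y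

/-- A space is *zero-dimensional* if the clopen sets form a base. -/
def ZeroDimensionalSpace (X : Type*) [TopologicalSpace X] : Prop :=
  IsTopologicalBasis {s : Set X | IsClopen s}

/-- A space is *analytic* if it embeds onto an analytic subset of some Polish space. -/
def AnalyticSpace (X : Type*) [tX : TopologicalSpace X] : Prop :=
  ∃ (Z : Type) (tZ : TopologicalSpace Z), @PolishSpace Z tZ ∧
    ∃ j : X → Z, @IsEmbedding X Z tX tZ j ∧ @AnalyticSet Z tZ (Set.range j)

/-- A space is *coanalytic* if it embeds onto the complement of an analytic subset of some
Polish space. -/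
def CoanalyticSpace (X : Type*) [tX : TopologicalSpace X] : Prop :=
  ∃ (Z : Type) (tZ : TopologicalSpace Z), @PolishSpace Z tZ ∧
    ∃ j : X → Z, @IsEmbedding X Z tX tZ j ∧ @AnalyticSet Z tZ (Set.range j)ᶜ

/-- A space is *Borel* if it embeds onto a Borel subset of some Polish space. -/
def BorelSpacePaper (X : Type*) [tX : TopologicalSpace X] : Prop :=
  ∃ (Z : Type) (tZ : TopologicalSpace Z), @PolishSpace Z tZ ∧
    ∃ j : X → Z, @IsEmbedding X Z tX tZ j ∧ @MeasurableSet Z (@borel Z tZ) (Set.range j)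

/-- `A ∈ Σ¹₁(X)`: for some embedding `j` of `X` into a Polish space `Z`, `j '' A` is the
trace on `j '' X` of an analytic subset of `Z`. -/
def RelativelyAnalytic {X : Type*} [tX : TopologicalSpace X] (A : Set X) : Prop :=
  ∃ (Z : Type) (tZ : TopologicalSpace Z), @PolishSpace Z tZ ∧
    ∃ j : X → Z, @IsEmbedding X Z tX tZ j ∧
      ∃ A' : Set Z, @AnalyticSet Z tZ A' ∧ j '' A = A' ∩ Set.range j

/-- A subset of a space is `Σ¹₂` if it is a continuous image of a coanalytic subset of a
Polish space. -/
def Sigma12Set {Z : Type*} [tZ : TopologicalSpace Z] (s : Set Z) : Prop :=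
  ∃ (W : Type) (tW : TopologicalSpace W), @PolishSpace W tW ∧
    ∃ (C : Set W) (f : W → Z), @AnalyticSet W tW Cᶜ ∧ @ContinuousOn W Z tW tZ f C ∧ f '' C = s

/-- `A ∈ Δ¹₂(X)`: for some embedding `j` of `X` into a Polish space `Z`, both `j '' A` and
`j '' Aᶜ` are traces on `j '' X` of `Σ¹₂` subsets of `Z`. -/
def RelativelyDelta12 {X : Type*} [tX : TopologicalSpace X] (A : Set X) : Prop :=
  ∃ (Z : Type) (tZ : TopologicalSpace Z), @PolishSpace Z tZ ∧
    ∃ j : X → Z, @IsEmbedding X Z tX tZ j ∧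
      (∃ A' : Set Z, @Sigma12Set Z tZ A' ∧ j '' A = A' ∩ Set.range j) ∧
      (∃ B' : Set Z, @Sigma12Set Z tZ B' ∧ j '' Aᶜ = B' ∩ Set.range j)

/-- A space is *meager* if it is a meager subset of itself. -/
def MeagerSpace (X : Type*) [TopologicalSpace X] : Prop :=
  IsMeagre (Set.univ : Set X)

/-- A space is *Baire* if no non-empty open subset of it is meager (the definition used in
the paper). -/
def PaperBaireSpace (X : Type*) [TopologicalSpace X] : Prop :=
  ∀ U : Set X, IsOpen U → U.Nonempty → ¬ IsMeagre U

/-- A space is *nowhere countable* if it is non-empty and no non-empty open subset of it is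
countable. -/
def NowhereCountable (X : Type*) [TopologicalSpace X] : Prop :=
  Nonempty X ∧ ∀ U : Set X, IsOpen U → U.Nonempty → ¬ U.Countable

/-- The iterated Cantor–Bendixson derivative of a space: `cbDeriv X 0 = X`,
`cbDeriv X (ξ+1)` is `cbDeriv X ξ` minus its isolated points, and intersections are taken
at limit stages. -/
noncomputable def cbDeriv (X : Type*) [TopologicalSpace X] (o : Ordinal.{0}) : Set X :=
  Ordinal.limitRecOn o Set.univ
    (fun _ ih => {x ∈ ih | x ∈ closure (ih \ {x})})
    (fun o _ ih => ⋂ (p : Set.Iio o), ih p.1 p.2)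

/-- A space is *scattered* if some iterated Cantor–Bendixson derivative of it is empty. -/
def ScatteredSpace (X : Type*) [TopologicalSpace X] : Prop :=
  ∃ o : Ordinal.{0}, cbDeriv X o = ∅

/-- A space is *n-discrete* if it is the union of `n` discrete subspaces. -/
def NDiscrete (n : ℕ) (X : Type*) [TopologicalSpace X] : Prop :=
  ∃ D : Fin n → Set X, (∀ k, DiscreteTopology ↥(D k)) ∧ ⋃ k, D k = Set.univ

/-- A space is *n-homogeneous* if it is the union of `n` homogeneous subspaces. -/
def NHomogeneous (n : ℕ) (X : Type*) [TopologicalSpace X] : Prop :=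
  ∃ Y : Fin n → Set X, (∀ k, HomogeneousSubspace (Y k)) ∧ ⋃ k, Y k = Set.univ

/-- A space is *σ-homogeneous* if it is the union of countably many homogeneous
subspaces. -/
def SigmaHomogeneous (X : Type*) [TopologicalSpace X] : Prop :=
  ∃ Y : ℕ → Set X, (∀ n, HomogeneousSubspace (Y n)) ∧ ⋃ n, Y n = Set.univ

/-- An `Fσ` subset: a countable union of closed sets. -/
def IsFsigma {X : Type*} [TopologicalSpace X] (s : Set X) : Prop :=
  ∃ F : ℕ → Set X, (∀ n, IsClosed (F n)) ∧ s = ⋃ n, F n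



section AuxProof

open Set Filter Topology MeasureTheory TopologicalSpace

section Hull
variable {α : Type*} [TopologicalSpace α]

lemma isMeagre_iUnion' {ι : Sort*} [Countable ι] {f : ι → Set α}
    (h : ∀ i, IsMeagre (f i)) : IsMeagre (⋃ i, f i) := by
  rw [IsMeagre, compl_iUnion]
  exact countable_iInter_mem.2 h

lemma IsClosed.baireMeasurableSet {s : Set α} (hs : IsClosed s) : BaireMeasurableSet s :=
  BaireMeasurableSet.of_compl hs.isOpen_compl.baireMeasurableSet

/-- Points all of whose neighborhoods meet `S` non-meagerly. -/
def baireKernel (S : Set α) : Set α :=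
  {x | ∀ V : Set α, IsOpen V → x ∈ V → ¬ IsMeagre (V ∩ S)}

lemma isClosed_baireKernel (S : Set α) : IsClosed (baireKernel S) := by
  rw [← isOpen_compl_iff, isOpen_iff_forall_mem_open]
  intro x hx
  simp only [baireKernel, mem_compl_iff, mem_setOf_eq, not_forall] at hx
  obtain ⟨V, hV, hxV, hm⟩ := hx
  classical
  refine ⟨V, fun y hy hyK => ?_, hV, hxV⟩
  simp only [baireKernel, mem_setOf_eq] at hyK
  exact hyK V hV hy (not_not.1 hm)

lemma isMeagre_diff_baireKernel [SecondCountableTopology α] (S : Set α) :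
    IsMeagre (S \ baireKernel S) := by
  have hsub : S \ baireKernel S ⊆
      ⋃ b ∈ {b ∈ countableBasis α | IsMeagre (b ∩ S)}, b ∩ S := by
    rintro x ⟨hxS, hxD⟩
    simp only [baireKernel, mem_setOf_eq, not_forall] at hxD
    obtain ⟨V, hV, hxV, hm⟩ := hxD
    rw [not_not] at hm
    obtain ⟨b, hb, hxb, hbV⟩ :=
      (isBasis_countableBasis α).exists_subset_of_mem_open hxV hV
    exact mem_biUnion ⟨hb, hm.mono (inter_subset_inter_left _ hbV)⟩ ⟨hxb, hxS⟩
  refine (isMeagre_biUnion ((countable_countableBasis α).mono (sep_subset _ _)) ?_).mono hsub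
  exact fun b hb => hb.2

/-- A Baire-measurable hull of a set. -/
def baireHull (S : Set α) : Set α := baireKernel S ∪ S

lemma subset_baireHull (S : Set α) : S ⊆ baireHull S := subset_union_right

lemma baireMeasurableSet_baireHull [SecondCountableTopology α] (S : Set α) :
    BaireMeasurableSet (baireHull S) := by
  have : baireHull S = baireKernel S ∪ (S \ baireKernel S) := by
    rw [baireHull, union_diff_self]
  rw [this]
  exact ((isClosed_baireKernel S).baireMeasurableSet).union
    (isMeagre_diff_baireKernel S).baireMeasurableSet

lemma isMeagre_of_eventuallyEq {B U : Set α} (h : B =ᵇ U) :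
    IsMeagre {x | (x ∈ B) = (x ∈ U)}ᶜ := by
  rw [IsMeagre, compl_compl]
  exact h

/-- Minimality of the Baire hull: the hull exceeds any Baire measurable superset of `S`
only by a meager set. -/
lemma isMeagre_baireHull_diff [SecondCountableTopology α] {S B : Set α} (hSB : S ⊆ B)
    (hB : BaireMeasurableSet B) : IsMeagre (baireHull S \ B) := by
  obtain ⟨U, hU, hBU⟩ := hB.residualEq_isOpen
  have hM : IsMeagre {x | (x ∈ B) = (x ∈ U)}ᶜ := isMeagre_of_eventuallyEq hBU
  -- the kernel is contained in the closure of U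
  have hker : baireKernel S ⊆ closure U := by
    intro x hx
    by_contra hxc
    refine hx (closure U)ᶜ isClosed_closure.isOpen_compl hxc (hM.mono ?_)
    rintro y ⟨hyV, hyS⟩
    have hyB : y ∈ B := hSB hyS
    have hyU : y ∉ U := fun h => hyV (subset_closure h)
    simp only [mem_compl_iff, mem_setOf_eq, eq_iff_iff]
    tauto
  have hfr : IsMeagre (closure U \ U) := by
    have : IsNowhereDense (closure U \ U) := by
      rw [IsClosed.isNowhereDense_iff (isClosed_closure.sdiff hU)]
      by_contra h
      obtain ⟨x, hx⟩ := nonempty_iff_ne_empty.2 h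
      have hxo : x ∈ closure U := (interior_subset hx).1
      have : (interior (closure U \ U) ∩ U).Nonempty := by
        have := mem_closure_iff.1 hxo _ isOpen_interior hx
        exact this
      obtain ⟨y, hy1, hy2⟩ := this
      exact (interior_subset hy1).2 hy2
    rw [isMeagre_iff_countable_union_isNowhereDense]
    exact ⟨{closure U \ U}, by simpa using this, countable_singleton _, by simp⟩
  refine (hfr.union hM).mono ?_
  rintro x ⟨hx, hxB⟩
  rcases hx with hx | hx
  swap
  · exact absurd (hSB hx) hxB
  have hxcl : x ∈ closure U := hker hx
  by_cases hxU : x ∈ U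
  · right
    simp only [mem_compl_iff, mem_setOf_eq, eq_iff_iff]
    tauto
  · exact Or.inl ⟨hxcl, hxU⟩

end Hull

section Cyl

/-- The cylinder of a finite sequence. -/
def listCyl (l : List ℕ) : Set (ℕ → ℕ) := {y | ∀ i, i < l.length → y i = l.getD i 0}

lemma listCyl_nil : listCyl [] = univ := by
  ext y; simp [listCyl]

lemma listCyl_concat_subset (l : List ℕ) (k : ℕ) : listCyl (l ++ [k]) ⊆ listCyl l := by
  intro y hy i hi
  have := hy i (by simp only [List.length_append, List.length_cons, List.length_nil]; omega)
  rwa [List.getD_append _ _ _ _ hi] at this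

lemma mem_listCyl_concat {l : List ℕ} {y : ℕ → ℕ} (hy : y ∈ listCyl l) :
    y ∈ listCyl (l ++ [y l.length]) := by
  intro i hi
  simp only [List.length_append, List.length_cons, List.length_nil] at hi
  rcases lt_or_eq_of_le (Nat.lt_succ_iff.1 hi) with h | h
  · rw [List.getD_append _ _ _ _ h]; exact hy i h
  · subst h
    rw [List.getD_eq_getElem _ _ (by simp)]
    simp

lemma listCyl_eq_iUnion (l : List ℕ) : listCyl l = ⋃ k, listCyl (l ++ [k]) := by
  apply Subset.antisymm
  · intro y hy
    exact mem_iUnion.2 ⟨y l.length, mem_listCyl_concat hy⟩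
  · exact iUnion_subset fun k => listCyl_concat_subset l k

/-- Cylinders of a point form a neighborhood basis. -/
lemma exists_listCyl_subset {y : ℕ → ℕ} {O : Set (ℕ → ℕ)} (hO : IsOpen O) (hy : y ∈ O) :
    ∃ n : ℕ, {z : ℕ → ℕ | ∀ i, i < n → z i = y i} ⊆ O := by
  obtain ⟨I, u, hu, hsub⟩ := isOpen_pi_iff.1 hO y hy
  refine ⟨(I.sup id) + 1, fun z hz => hsub ?_⟩
  intro i hi
  have : z i = y i := hz i (Nat.lt_succ_of_le (Finset.le_sup (f := id) hi))
  rw [this]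
  exact (hu i hi).2

end Cyl

section Sep

variable {α : Type*} [TopologicalSpace α] [T2Space α] [RegularSpace α]

lemma exists_open_notMem_closure {x z : α} (h : x ≠ z) :
    ∃ W : Set α, IsOpen W ∧ z ∈ W ∧ x ∉ closure W := by
  obtain ⟨V, W, hV, hW, hxV, hzW, hVW⟩ := t2_separation h
  obtain ⟨t, htz, htc, htW⟩ := exists_mem_nhds_isClosed_subset (hW.mem_nhds hzW)
  refine ⟨interior t, isOpen_interior, mem_interior_iff_mem_nhds.2 htz, fun hx => ?_⟩
  have : x ∈ t := (htc.closure_subset_iff.2 interior_subset) hx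
  exact Set.disjoint_left.1 hVW hxV (htW this)

/-- If `x` lies in the closure of all images of the cylinders along a branch `y`,
then `x = f y`. -/
lemma eq_of_mem_closure_image_listCyl {f : (ℕ → ℕ) → α} (hf : Continuous f)
    {x : α} {y : ℕ → ℕ} {L : ℕ → List ℕ}
    (hmem : ∀ n, y ∈ listCyl (L n)) (hlen : ∀ n, (L n).length = n)
    (hx : ∀ n, x ∈ closure (f '' listCyl (L n))) : x = f y := by
  by_contra hne
  obtain ⟨W, hWo, hfyW, hxW⟩ := exists_open_notMem_closure hne
  obtain ⟨n, hn⟩ := exists_listCyl_subset (hWo.preimage hf) hfyW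
  have hcyl : listCyl (L n) ⊆ f ⁻¹' W := by
    intro z hz
    apply hn
    intro i hi
    rw [hz i (by rw [hlen n]; exact hi), (hmem n) i (by rw [hlen n]; exact hi)]
  exact hxW (closure_mono (image_subset_iff.2 hcyl) (hx n))

end Sep

section AnBM

lemma listCyl_mem_of {l : List ℕ} {y : ℕ → ℕ}
    (h : ∀ i, i < l.length → y i = l.getD i 0) : y ∈ listCyl l := h

variable {α : Type*} [TopologicalSpace α] [T2Space α] [RegularSpace α] [SecondCountableTopology α]

theorem MeasureTheory.AnalyticSet.baireMeasurableSet' {A : Set α} (hA : AnalyticSet A) :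
    BaireMeasurableSet A := by
  rw [AnalyticSet] at hA
  rcases hA with rfl | ⟨f, hf, rfl⟩
  · exact IsMeagre.empty.baireMeasurableSet
  classical
  set As : List ℕ → Set α := fun l => f '' listCyl l with hAs
  set Bs : List ℕ → Set α := fun l => baireHull (As l) ∩ closure (As l) with hBs
  have hAB : ∀ l, As l ⊆ Bs l := fun l =>
    subset_inter (subset_baireHull _) subset_closure
  have hBM : ∀ l, BaireMeasurableSet (Bs l) := fun l =>
    (baireMeasurableSet_baireHull _).inter (isClosed_closure.baireMeasurableSet)
  have hmeag : ∀ l, IsMeagre (Bs l \ ⋃ k, Bs (l ++ [k])) := by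
    intro l
    have h1 : As l ⊆ ⋃ k, Bs (l ++ [k]) := by
      rw [hAs]
      intro x hx
      obtain ⟨y, hy, rfl⟩ := hx
      rw [listCyl_eq_iUnion l] at hy
      obtain ⟨k, hk⟩ := mem_iUnion.1 hy
      exact mem_iUnion.2 ⟨k, hAB _ ⟨y, hk, rfl⟩⟩
    have h2 : BaireMeasurableSet (⋃ k, Bs (l ++ [k])) := BaireMeasurableSet.iUnion fun k => hBM _
    exact (isMeagre_baireHull_diff h1 h2).mono
      (diff_subset_diff_left inter_subset_left)
  set E : Set α := ⋃ l : List ℕ, (Bs l \ ⋃ k, Bs (l ++ [k])) with hE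
  have hEmeag : IsMeagre E := isMeagre_iUnion' hmeag
  have hBin : ∀ x ∈ Bs [], x ∉ E → x ∈ range f := by
    intro x hx hxE
    have hstep : ∀ l : List ℕ, x ∈ Bs l → ∃ k, x ∈ Bs (l ++ [k]) := by
      intro l hl
      by_contra hc
      push_neg at hc
      exact hxE (mem_iUnion.2 ⟨l, hl, by simpa using hc⟩)
    set g : List ℕ → ℕ := fun l => if h : ∃ k, x ∈ Bs (l ++ [k]) then h.choose else 0 with hg
    set L : ℕ → List ℕ := fun n => Nat.rec [] (fun _ l => l ++ [g l]) n with hL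
    have hLsucc : ∀ n, L (n + 1) = L n ++ [g (L n)] := fun n => rfl
    have hLmem : ∀ n, x ∈ Bs (L n) := by
      intro n
      induction n with
      | zero => exact hx
      | succ n ih =>
        rw [hLsucc]
        obtain ⟨k, hk⟩ := hstep _ ih
        have hex : ∃ k, x ∈ Bs (L n ++ [k]) := ⟨k, hk⟩
        rw [hg]
        simp only [hex, dif_pos]
        exact hex.choose_spec
    have hLlen : ∀ n, (L n).length = n := by
      intro n
      induction n with
      | zero => rfl
      | succ n ih => rw [hLsucc]; simp [ih]
    -- the branch
    set y : ℕ → ℕ := fun n => g (L n) with hy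
    have hprefix : ∀ n m, n ≤ m → (L m).getD n 0 = y n → True := fun _ _ _ _ => trivial
    have hgetD : ∀ m n, n < m → (L m).getD n 0 = y n := by
      intro m
      induction m with
      | zero => intro n hn; omega
      | succ m ih =>
        intro n hn
        rw [hLsucc]
        rcases lt_or_eq_of_le (Nat.lt_succ_iff.1 hn) with h | h
        · rw [List.getD_append _ _ _ _ (by rw [hLlen]; exact h)]
          exact ih n h
        · subst h
          have hn' : (L n).length = n := hLlen n
          rw [List.getD_append_right _ _ _ _ (by omega), hn', Nat.sub_self]
          rfl
    have hymem : ∀ n, y ∈ listCyl (L n) := by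
      intro n
      apply listCyl_mem_of
      intro i hi
      rw [hLlen] at hi
      exact (hgetD n i hi).symm
    have hclos : ∀ n, x ∈ closure (f '' listCyl (L n)) := fun n => (hLmem n).2
    exact ⟨y, (eq_of_mem_closure_image_listCyl hf hymem hLlen hclos).symm⟩
  -- conclude
  have hsub : range f ⊆ Bs [] := by
    have : range f = As [] := by rw [hAs]; simp [listCyl_nil, image_univ]
    rw [this]; exact hAB []
  have hdiff : Bs [] \ range f ⊆ E := by
    intro x hx
    by_contra hxE
    exact hx.2 (hBin x hx.1 hxE)
  have : range f = Bs [] \ (Bs [] \ range f) := by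
    rw [diff_diff_cancel_left hsub]
  rw [this]
  exact (hBM []).diff ((hEmeag.mono hdiff).baireMeasurableSet)

end AnBM

section Gdelta

variable {α : Type*} [TopologicalSpace α] [PolishSpace α]

/-- A countable intersection of open subsets of a Polish space is Polish. -/
theorem polishSpace_sInter_of_isOpen {S : Set (Set α)} (hS : S.Countable)
    (ho : ∀ s ∈ S, IsOpen s) : PolishSpace ↥(⋂₀ S) := by
  rcases S.eq_empty_or_nonempty with rfl | hne
  · rw [sInter_empty]
    exact isClosed_univ.polishSpace
  obtain ⟨u, rfl⟩ := hS.exists_eq_range hne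
  have huo : ∀ n, IsOpen (u n) := fun n => ho _ (mem_range_self n)
  rw [sInter_range]
  haveI : ∀ n, PolishSpace ↥(u n) := fun n => (huo n).polishSpace
  set t : Set α := ⋂ n, u n with ht
  set φ : ↥t → ∀ n, ↥(u n) := fun x n => ⟨x.1, mem_iInter.1 x.2 n⟩ with hφ
  have hφcont : Continuous φ := by
    apply continuous_pi
    intro n
    exact (continuous_subtype_val).subtype_mk _
  have hφind : IsInducing φ := by
    refine IsInducing.of_comp hφcont ((continuous_apply 0).subtype_val) ?_
    have : (fun w : ∀ n, ↥(u n) => (w 0).1) ∘ φ = Subtype.val := rfl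
    rw [this]
    exact IsInducing.subtypeVal
  have hφinj : Function.Injective φ := by
    intro a b hab
    have : (φ a 0).1 = (φ b 0).1 := by rw [hab]
    exact Subtype.ext this
  have hrange : range φ = ⋂ n, {w : ∀ m, ↥(u m) | (w n).1 = (w 0).1} := by
    ext w
    simp only [mem_range, mem_iInter, mem_setOf_eq]
    constructor
    · rintro ⟨x, rfl⟩ n; rfl
    · intro h
      have hmem : (w 0).1 ∈ t := mem_iInter.2 fun n => h n ▸ (w n).2
      refine ⟨⟨(w 0).1, hmem⟩, ?_⟩
      funext n
      exact Subtype.ext (h n).symm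
  have hclosed : IsClosed (range φ) := by
    rw [hrange]
    exact isClosed_iInter fun n =>
      isClosed_eq ((continuous_apply n).subtype_val) ((continuous_apply 0).subtype_val)
  exact (Topology.IsClosedEmbedding.mk ⟨hφind, hφinj⟩ hclosed).polishSpace

end Gdelta

section Preimage

variable {X C : Type*} [TopologicalSpace X] [TopologicalSpace C]

/-- The preimage of a meager set under an embedding with dense range is meager. -/
lemma IsMeagre.preimage_of_isEmbedding_denseRange {e : X → C} (he : Topology.IsEmbedding e)
    (hd : Dense (range e)) {M : Set C} (hM : IsMeagre M) : IsMeagre (e ⁻¹' M) := by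
  rw [isMeagre_iff_countable_union_isNowhereDense] at hM ⊢
  obtain ⟨S, hnwd, hScnt, hScov⟩ := hM
  refine ⟨(fun N => e ⁻¹' closure N) '' S, ?_, hScnt.image _, ?_⟩
  · rintro _ ⟨N, hN, rfl⟩
    have hcl : IsClosed (e ⁻¹' closure N) := isClosed_closure.preimage he.continuous
    rw [hcl.isNowhereDense_iff]
    by_contra h
    obtain ⟨x, hx⟩ := nonempty_iff_ne_empty.2 h
    obtain ⟨O, hOo, hOeq⟩ := (Topology.IsInducing.isOpen_iff he.toIsInducing).1 isOpen_interior
    have hxO : e x ∈ O := by rw [← mem_preimage, hOeq]; exact hx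
    have hOsub : O ∩ range e ⊆ closure N := by
      rintro _ ⟨hpO, x', rfl⟩
      have : x' ∈ interior (e ⁻¹' closure N) := by rw [← hOeq]; exact hpO
      exact mem_preimage.1 (interior_subset this)
    have hOcl : O ⊆ closure N := by
      refine fun p hp => ?_
      have := hd.open_subset_closure_inter hOo hp
      exact closure_minimal hOsub isClosed_closure (closure_mono (fun q hq => hq) this)
    have : O ⊆ interior (closure N) := interior_maximal hOcl hOo
    have hxint : e x ∈ interior (closure N) := this hxO
    have hempty : interior (closure N) = ∅ := hnwd N hN
    rw [hempty] at hxint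
    exact hxint
  · intro x hx
    obtain ⟨N, hN, hxN⟩ := hScov hx
    exact ⟨e ⁻¹' closure N, ⟨N, hN, rfl⟩, subset_closure hxN⟩

end Preimage

section SubAnalytic

variable {Z : Type*} [TopologicalSpace Z]

/-- The trace of an analytic set on a subset it is contained in is analytic in that subspace. -/
lemma MeasureTheory.AnalyticSet.preimage_val {C s : Set Z} (hs : MeasureTheory.AnalyticSet s) (hsC : s ⊆ C) :
    MeasureTheory.AnalyticSet ((Subtype.val : C → Z) ⁻¹' s) := by
  rw [MeasureTheory.AnalyticSet] at hs ⊢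
  rcases hs with rfl | ⟨f, hf, rfl⟩
  · left; simp
  right
  refine ⟨fun p => ⟨f p, hsC (mem_range_self p)⟩, hf.subtype_mk _, ?_⟩
  ext ⟨z, hz⟩
  constructor
  · rintro ⟨p, hp⟩
    have : f p = z := congrArg Subtype.val hp
    exact this ▸ mem_range_self p
  · rintro ⟨p, hp⟩
    exact ⟨p, Subtype.ext hp⟩

end SubAnalytic

theorem aux_dense_polish {X : Type*} [TopologicalSpace X] {Z : Type*} [TopologicalSpace Z]
    [PolishSpace Z] (hBaire : PaperBaireSpace X) {j : X → Z} (hj : Topology.IsEmbedding j)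
    (hBM : AnalyticSet (range j) ∨ AnalyticSet (range j)ᶜ) :
    ∃ D : Set X, Dense D ∧ PolishSpace ↥D := by
  classical
  set C : Set Z := closure (range j) with hC
  haveI hCpol : PolishSpace ↥C := isClosed_closure.polishSpace
  set e : X → ↥C := fun x => ⟨j x, subset_closure (mem_range_self x)⟩ with he
  have hecont : Continuous e := hj.continuous.subtype_mk _
  have heemb : Topology.IsEmbedding e := by
    refine ⟨Topology.IsInducing.of_comp hecont continuous_subtype_val ?_, ?_⟩
    · have : (Subtype.val : ↥C → Z) ∘ e = j := rfl
      rw [this]; exact hj.toIsInducing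
    · intro a b hab
      exact hj.injective (congrArg Subtype.val hab)
  have hrange : range e = (Subtype.val : ↥C → Z) ⁻¹' (range j) := by
    ext ⟨z, hz⟩
    constructor
    · rintro ⟨x, hx⟩; exact ⟨x, congrArg Subtype.val hx⟩
    · rintro ⟨x, hx⟩; exact ⟨x, Subtype.ext hx⟩
  have hdense : Dense (range e) := by
    rw [dense_iff_closure_eq, Topology.IsInducing.subtypeVal.closure_eq_preimage_closure_image]
    have himg : (Subtype.val : ↥C → Z) '' (range e) = range j := by
      rw [hrange, Subtype.image_preimage_coe]
      exact inter_eq_right.2 subset_closure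
    rw [himg]
    ext ⟨z, hz⟩
    simpa using hz
  -- Baire measurability of the range of e
  have hBMre : BaireMeasurableSet (range e) := by
    letI := upgradeIsCompletelyMetrizable ↥C
    rcases hBM with hA | hA
    · have := (hA.preimage_val (subset_closure : range j ⊆ C)).baireMeasurableSet'
      rwa [← hrange] at this
    · have hCA : AnalyticSet ((range j)ᶜ ∩ C) := by
        have h1 : AnalyticSet ((range j)ᶜ) := hA
        have h2 : AnalyticSet C := isClosed_closure.analyticSet
        have : (range j)ᶜ ∩ C = ⋂ b : Bool, (if b then (range j)ᶜ else C) := by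
          ext z; simp [Bool.forall_bool, and_comm]
        rw [this]
        exact AnalyticSet.iInter fun b => by cases b <;> simpa
      have := (hCA.preimage_val inter_subset_right).baireMeasurableSet'
      have heq : (Subtype.val : ↥C → Z) ⁻¹' ((range j)ᶜ ∩ C) = (range e)ᶜ := by
        rw [preimage_inter, preimage_compl, ← hrange]
        ext ⟨z, hz⟩; simp [hz]
      rw [heq] at this
      exact this.of_compl
  obtain ⟨U, hUo, hUe⟩ := hBMre.residualEq_isOpen
  set M : Set ↥C := {p | (p ∈ range e) = (p ∈ U)}ᶜ with hM
  have hMme : IsMeagre M := isMeagre_of_eventuallyEq hUe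
  have hUdense : Dense U := by
    by_contra hnd
    obtain ⟨p, hp⟩ : ∃ p : ↥C, p ∉ closure U := by
      by_contra hc; push_neg at hc; exact hnd hc
    set V : Set ↥C := (closure U)ᶜ with hV
    have hVo : IsOpen V := isClosed_closure.isOpen_compl
    have hTo : IsOpen (e ⁻¹' V) := hVo.preimage hecont
    have hTne : (e ⁻¹' V).Nonempty := by
      obtain ⟨q, hq1, hq2⟩ := hdense.inter_open_nonempty V hVo ⟨p, hp⟩
      obtain ⟨x, rfl⟩ := hq2
      exact ⟨x, hq1⟩
    refine hBaire _ hTo hTne ?_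
    refine (hMme.preimage_of_isEmbedding_denseRange heemb hdense).mono ?_
    intro x hx
    have h1 : e x ∈ range e := mem_range_self x
    have h2 : e x ∉ U := fun h => hx (subset_closure h)
    show ¬ ((e x ∈ range e) = (e x ∈ U))
    simp only [eq_iff_iff]
    tauto
  have hres : range e ∈ residual ↥C := by
    have h1 : U ∈ residual ↥C := residual_of_dense_open hUo hUdense
    refine mem_of_superset (inter_mem h1 hMme) ?_
    rintro q ⟨hqU, hqM⟩
    simp only [hM, mem_compl_iff, mem_setOf_eq, not_not, eq_iff_iff] at hqM
    exact hqM.2 hqU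
  obtain ⟨S, hSo, hSd, hScnt, hSsub⟩ := mem_residual_iff.1 hres
  set t : Set ↥C := ⋂₀ S with ht
  haveI htpol : PolishSpace ↥t := polishSpace_sInter_of_isOpen hScnt hSo
  have htd : Dense t := by
    letI := upgradeIsCompletelyMetrizable ↥C
    exact dense_sInter_of_isOpen hSo hScnt hSd
  have htsub : t ⊆ range e := hSsub
  set D : Set X := e ⁻¹' t with hD
  have hDd : Dense D := by
    rw [dense_iff_inter_open]
    intro W hWo hWne
    obtain ⟨O, hOo, hOeq⟩ := heemb.toIsInducing.isOpen_iff.1 hWo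
    obtain ⟨x, hxW⟩ := hWne
    have hxO : e x ∈ O := by rw [← hOeq] at hxW; exact hxW
    obtain ⟨q, hqO, hqt⟩ := htd.inter_open_nonempty O hOo ⟨e x, hxO⟩
    obtain ⟨x', rfl⟩ := htsub hqt
    exact ⟨x', (by rw [← hOeq]; exact hqO), hqt⟩
  set ψ : ↥D → ↥t := fun x => ⟨e x.1, x.2⟩ with hψ
  have hψcont : Continuous ψ := (hecont.comp continuous_subtype_val).subtype_mk _
  have hψind : Topology.IsInducing ψ := by
    refine Topology.IsInducing.of_comp hψcont continuous_subtype_val ?_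
    have : (Subtype.val : ↥t → ↥C) ∘ ψ = e ∘ (Subtype.val : ↥D → X) := rfl
    rw [this]
    exact heemb.toIsInducing.comp Topology.IsInducing.subtypeVal
  have hψbij : Function.Bijective ψ := by
    constructor
    · intro a b hab
      exact Subtype.ext (heemb.injective (congrArg Subtype.val hab))
    · rintro ⟨q, hq⟩
      obtain ⟨x, rfl⟩ := htsub hq
      exact ⟨⟨x, hq⟩, rfl⟩
  have hhomeo : ↥D ≃ₜ ↥t := (Equiv.ofBijective ψ hψbij).toHomeomorphOfIsInducing hψind
  exact ⟨D, hDd, hhomeo.isClosedEmbedding.polishSpace⟩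

end AuxProof

/-- Every nonempty Baire separable metrizable space that is analytic or coanalytic has a
dense Polish subspace. -/
theorem baire_analytic_or_coanalytic_has_dense_polish_subspace
    (X : Type) [TopologicalSpace X] [MetrizableSpace X] [SeparableSpace X] [Nonempty X]
    (hBaire : PaperBaireSpace X) (hdef : AnalyticSpace X ∨ CoanalyticSpace X) :
    ∃ D : Set X, Dense D ∧ PolishSpace ↥D := by
  rcases hdef with ⟨Z, tZ, hpol, j, hj, hA⟩ | ⟨Z, tZ, hpol, j, hj, hA⟩
  · letI := tZ; haveI := hpol
    exact aux_dense_polish hBaire hj (Or.inl hA)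
  · letI := tZ; haveI := hpol
    exact aux_dense_polish hBaire hj (Or.inr hA)
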